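/- Let (c₁,B₁),…,(cₘ,Bₘ) be a Brascamp–Lieb datum on ℝⁿ with Σᵢ cᵢ nᵢ = n, and suppose the positive definite n×n matrix A satisfies A⁻¹ = Σᵢ cᵢ Bᵢ* (Bᵢ A Bᵢ*)⁻¹ Bᵢ. Then the Gaussian functions fᵢ(x) = exp(−⟨(Bᵢ A Bᵢ*)⁻¹ x, x⟩/2) on ℝ^{nᵢ} achieve equality: ∫_{ℝⁿ} ∏ᵢ (fᵢ(Bᵢx))^{cᵢ} dx = C ∏ᵢ (∫_{ℝ^{nᵢ}} fᵢ dx)^{cᵢ}, where C = (det(A) / ∏ᵢ det(Bᵢ A Bᵢ*)^{cᵢ})^{1/2}. -/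

import Mathlib

open MeasureTheory Matrix

open Real

open scoped MatrixOrder in
lemma gauss_int {k : ℕ} (M : Matrix (Fin k) (Fin k) ℝ) (hM : M.PosDef) :
    ∫ x : Fin k → ℝ, Real.exp (-(M.mulVec x ⬝ᵥ x) / 2)
      = Real.sqrt ((2 * π) ^ k / M.det) := by
  classical
  set S := CFC.sqrt M with hSdef
  have hS : S.PosSemidef := (CFC.sqrt_nonneg M).posSemidef
  have hSS : S * S = M := CFC.sqrt_mul_sqrt_self M hM.posSemidef.nonneg
  have hdetM : 0 < M.det := hM.det_pos
  have hdetS2 : S.det * S.det = M.det := by rw [← det_mul, hSS]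
  have habs : |S.det| = Real.sqrt M.det := by
    rw [← hdetS2, ← sq, Real.sqrt_sq_eq_abs]
  have hdetS_ne : S.det ≠ 0 := by
    intro h; rw [h, zero_mul] at hdetS2; exact hdetM.ne hdetS2
  have hsymm : Sᵀ = S := hS.1
  have hquad : ∀ x : Fin k → ℝ, M.mulVec x ⬝ᵥ x = S.mulVec x ⬝ᵥ S.mulVec x := by
    intro x
    rw [← hSS, ← mulVec_mulVec, dotProduct_comm, dotProduct_mulVec, ← mulVec_transpose, hsymm]
  have hco : ⇑(Matrix.toLin' S) = S.mulVec := by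
    funext v; exact Matrix.toLin'_apply S v
  have hmeas : Measurable S.mulVec := by
    rw [← hco]; exact (LinearMap.continuous_on_pi _).measurable
  have hmap : Measure.map S.mulVec (volume : Measure (Fin k → ℝ))
      = ENNReal.ofReal |S.det|⁻¹ • volume := by
    have := Real.map_matrix_volume_pi_eq_smul_volume_pi hdetS_ne
    rwa [hco, abs_inv] at this
  have hg : Continuous fun y : Fin k → ℝ => Real.exp (-(y ⬝ᵥ y) / 2) := by
    unfold dotProduct
    fun_prop
  have key : ∫ x : Fin k → ℝ, Real.exp (-(S.mulVec x ⬝ᵥ S.mulVec x) / 2)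
      = |S.det|⁻¹ * ∫ y : Fin k → ℝ, Real.exp (-(y ⬝ᵥ y) / 2) := by
    rw [← MeasureTheory.integral_map hmeas.aemeasurable hg.aestronglyMeasurable, hmap,
      MeasureTheory.integral_smul_measure]
    simp [ENNReal.toReal_ofReal (by positivity)]
  have hstd : ∫ y : Fin k → ℝ, Real.exp (-(y ⬝ᵥ y) / 2) = Real.sqrt (2 * π) ^ k := by
    have hpt : ∀ y : Fin k → ℝ, Real.exp (-(y ⬝ᵥ y) / 2)
        = ∏ i, Real.exp (-(1/2 : ℝ) * (y i) ^ 2) := by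
      intro y
      rw [← Real.exp_sum]
      congr 1
      simp only [dotProduct, neg_div, Finset.sum_div, ← Finset.sum_neg_distrib]
      exact Finset.sum_congr rfl (by intros; ring)
    simp_rw [hpt]
    rw [MeasureTheory.integral_fintype_prod_volume_eq_pow (ι := Fin k)
      (f := fun t : ℝ => Real.exp (-(1/2 : ℝ) * t ^ 2))]
    rw [integral_gaussian]
    rw [show π / (1/2 : ℝ) = 2 * π by ring]
    simp
  calc ∫ x : Fin k → ℝ, Real.exp (-(M.mulVec x ⬝ᵥ x) / 2)
      = ∫ x : Fin k → ℝ, Real.exp (-(S.mulVec x ⬝ᵥ S.mulVec x) / 2) := by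
        simp_rw [hquad]
    _ = |S.det|⁻¹ * Real.sqrt (2 * π) ^ k := by rw [key, hstd]
    _ = Real.sqrt ((2 * π) ^ k / M.det) := by
        rw [habs, Real.sqrt_div' _ hdetM.le, inv_mul_eq_div]
        congr 1
        rw [show ((2*π : ℝ))^k = (Real.sqrt (2*π)^k)^2 by
          rw [← pow_mul, mul_comm k 2, pow_mul, Real.sq_sqrt (by positivity)],
          Real.sqrt_sq (by positivity)]

/-- **Equality case in the Brascamp–Lieb inequality** (Theorem 2 of the paper).
Under the condition `A⁻¹ = ∑ cᵢ Bᵢ* (Bᵢ A Bᵢ*)⁻¹ Bᵢ`, the Gaussian functions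
`fᵢ(x) = exp(−⟨(Bᵢ A Bᵢ*)⁻¹ x, x⟩/2)` achieve equality in the Brascamp–Lieb
inequality with constant `C = (det A / ∏ det (Bᵢ A Bᵢ*)^{cᵢ})^{1/2}`. -/
theorem brascamp_lieb_equality_case
    (m n : ℕ) (ni : Fin m → ℕ) (c : Fin m → ℝ) (hc : ∀ i, 0 < c i)
    (B : ∀ i, Matrix (Fin (ni i)) (Fin n) ℝ)
    (hB : ∀ i, Function.Surjective (B i).mulVec)
    (hdim : ∑ i, c i * (ni i : ℝ) = (n : ℝ))
    (A : Matrix (Fin n) (Fin n) ℝ) (hA : A.PosDef)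
    (hjohn : A⁻¹ = ∑ i, c i • ((B i)ᵀ * (B i * A * (B i)ᵀ)⁻¹ * B i))
    (f : ∀ i, (Fin (ni i) → ℝ) → ℝ)
    (hf : ∀ i x, f i x = Real.exp (- (((B i * A * (B i)ᵀ)⁻¹).mulVec x ⬝ᵥ x) / 2)) :
    ∫ x : Fin n → ℝ, ∏ i, (f i ((B i).mulVec x)) ^ (c i) =
      Real.sqrt (A.det / ∏ i, ((B i * A * (B i)ᵀ).det) ^ (c i)) *
        ∏ i, (∫ y : Fin (ni i) → ℝ, f i y) ^ (c i) := by
  classical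
  set M : ∀ i : Fin m, Matrix (Fin (ni i)) (Fin (ni i)) ℝ :=
    fun i => B i * A * (B i)ᵀ with hMdef
  -- transpose injectivity (nonvanishing)
  have hBT : ∀ i (u : Fin (ni i) → ℝ), u ≠ 0 → (B i)ᵀ.mulVec u ≠ 0 := by
    intro i u hu h0
    apply hu
    have hdot : ∀ z : Fin n → ℝ, u ⬝ᵥ (B i).mulVec z = 0 := by
      intro z
      rw [dotProduct_mulVec, ← mulVec_transpose, h0, zero_dotProduct]
    have : u ⬝ᵥ u = 0 := by
      obtain ⟨z, hz⟩ := hB i u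
      simpa [hz] using hdot z
    exact (dotProduct_self_eq_zero).mp this
  -- positive definiteness of M i
  have hMpos : ∀ i, (M i).PosDef := by
    intro i
    refine Matrix.PosDef.of_dotProduct_mulVec_pos ?_ ?_
    · have := hA.posSemidef.mul_mul_conjTranspose_same (B i)
      simpa [hMdef, Matrix.conjTranspose_eq_transpose_of_trivial] using this.1
    · intro x hx
      have hx' : (B i)ᵀ.mulVec x ≠ 0 := hBT i x hx
      have := hA.dotProduct_mulVec_pos hx'
      simp only [star_trivial] at this ⊢
      calc x ⬝ᵥ (M i).mulVec x
          = x ⬝ᵥ (B i).mulVec (A.mulVec ((B i)ᵀ.mulVec x)) := by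
            simp [hMdef, ← mulVec_mulVec, Matrix.mul_assoc]
        _ = (B i)ᵀ.mulVec x ⬝ᵥ A.mulVec ((B i)ᵀ.mulVec x) := by
            rw [dotProduct_mulVec, ← mulVec_transpose]
        _ > 0 := this
  have hMinv : ∀ i, (M i)⁻¹.PosDef := fun i => (hMpos i).inv
  have hd : ∀ i, 0 < (M i).det := fun i => (hMpos i).det_pos
  -- integral of each f i
  have hint : ∀ i, (∫ y : Fin (ni i) → ℝ, f i y)
      = Real.sqrt ((2 * π) ^ (ni i) * (M i).det) := by
    intro i
    have : (fun y : Fin (ni i) → ℝ => f i y)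
        = fun y => Real.exp (-((M i)⁻¹.mulVec y ⬝ᵥ y) / 2) := by
      funext y; rw [hf i y]
    rw [this, gauss_int _ (hMinv i), Matrix.det_nonsing_inv]
    congr 1
    rw [Ring.inverse_eq_inv', div_eq_mul_inv, inv_inv]
  -- LHS integrand
  have hquad : ∀ x : Fin n → ℝ,
      ∑ i, c i * ((M i)⁻¹.mulVec ((B i).mulVec x) ⬝ᵥ (B i).mulVec x)
        = A⁻¹.mulVec x ⬝ᵥ x := by
    intro x
    rw [hjohn]
    have hsum : ∀ (N : Fin m → Matrix (Fin n) (Fin n) ℝ),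
        (∑ i, N i) *ᵥ x ⬝ᵥ x = ∑ i, (N i *ᵥ x ⬝ᵥ x) := by
      intro N
      let φ : Matrix (Fin n) (Fin n) ℝ →+ ℝ :=
        AddMonoidHom.mk' (fun N => N *ᵥ x ⬝ᵥ x)
          (fun N₁ N₂ => by simp [Matrix.add_mulVec, add_dotProduct])
      exact map_sum φ N Finset.univ
    rw [hsum]
    refine Finset.sum_congr rfl fun i _ => ?_
    rw [Matrix.smul_mulVec, smul_dotProduct, smul_eq_mul]
    congr 1
    rw [show (B i)ᵀ * (M i)⁻¹ * B i = (B i)ᵀ * ((M i)⁻¹ * B i) from Matrix.mul_assoc _ _ _,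
      ← mulVec_mulVec, ← mulVec_mulVec]
    rw [mulVec_transpose, ← dotProduct_mulVec]
  have hpt : ∀ x : Fin n → ℝ, (∏ i, (f i ((B i).mulVec x)) ^ (c i))
      = Real.exp (-(A⁻¹.mulVec x ⬝ᵥ x) / 2) := by
    intro x
    have : ∀ i, (f i ((B i).mulVec x)) ^ (c i)
        = Real.exp (-(c i * ((M i)⁻¹.mulVec ((B i).mulVec x) ⬝ᵥ (B i).mulVec x)) / 2) := by
      intro i
      rw [hf, ← Real.exp_mul]
      congr 1
      ring
    simp_rw [this]
    rw [← Real.exp_sum]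
    congr 1
    rw [← hquad x]
    simp only [neg_div, Finset.sum_neg_distrib, Finset.sum_div]
  have hAinv : A⁻¹.PosDef := hA.inv
  have hLHS : (∫ x : Fin n → ℝ, ∏ i, (f i ((B i).mulVec x)) ^ (c i))
      = Real.sqrt ((2 * π) ^ n * A.det) := by
    rw [show (fun x : Fin n → ℝ => ∏ i, (f i ((B i).mulVec x)) ^ (c i))
        = fun x => Real.exp (-(A⁻¹.mulVec x ⬝ᵥ x) / 2) from funext hpt]
    rw [gauss_int _ hAinv, Matrix.det_nonsing_inv]
    congr 1
    rw [Ring.inverse_eq_inv', div_eq_mul_inv, inv_inv]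
  -- assemble
  rw [hLHS]
  simp_rw [hint]
  have haA : 0 < A.det := hA.det_pos
  set P : ℝ := 2 * π with hP
  have hPpos : 0 < P := by positivity
  have hDpos : 0 < ∏ i, ((M i).det) ^ (c i) :=
    Finset.prod_pos fun i _ => Real.rpow_pos_of_pos (hd i) _
  have hPM : ∀ i, 0 < P ^ (ni i) * (M i).det :=
    fun i => mul_pos (pow_pos hPpos _) (hd i)
  have hPA : 0 < P ^ n * A.det := mul_pos (pow_pos hPpos _) haA
  have hQ : 0 < A.det / ∏ i, ((M i).det) ^ (c i) := div_pos haA hDpos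
  have hlhs_pos : 0 < Real.sqrt (P ^ n * A.det) := Real.sqrt_pos.mpr hPA
  have hrhs_pos : 0 < Real.sqrt (A.det / ∏ i, ((M i).det) ^ (c i)) *
      ∏ i, Real.sqrt (P ^ (ni i) * (M i).det) ^ (c i) := by
    apply mul_pos (Real.sqrt_pos.mpr hQ)
    exact Finset.prod_pos fun i _ =>
      Real.rpow_pos_of_pos (Real.sqrt_pos.mpr (hPM i)) _
  rw [← Real.exp_log hlhs_pos, ← Real.exp_log hrhs_pos]
  congr 1
  have hsqrt_log : ∀ x : ℝ, 0 < x → Real.log (Real.sqrt x) = Real.log x / 2 :=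
    fun x hx => Real.log_sqrt hx.le
  rw [Real.log_mul (Real.sqrt_pos.mpr hQ).ne'
      (Finset.prod_pos fun i _ =>
        Real.rpow_pos_of_pos (Real.sqrt_pos.mpr (hPM i)) _).ne']
  rw [hsqrt_log _ hPA, hsqrt_log _ hQ]
  rw [Real.log_prod (fun i _ =>
      (Real.rpow_pos_of_pos (Real.sqrt_pos.mpr (hPM i)) _).ne')]
  have hterm : ∀ i, Real.log (Real.sqrt (P ^ (ni i) * (M i).det) ^ (c i))
      = c i * ((ni i : ℝ) * Real.log P / 2 + Real.log ((M i).det) / 2) := by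
    intro i
    rw [Real.log_rpow (Real.sqrt_pos.mpr (hPM i)), hsqrt_log _ (hPM i),
      Real.log_mul (pow_pos hPpos _).ne' (hd i).ne', Real.log_pow]
    ring
  simp_rw [hterm]
  rw [Real.log_div haA.ne' hDpos.ne',
    Real.log_prod (fun i _ => (Real.rpow_pos_of_pos (hd i) _).ne')]
  simp_rw [Real.log_rpow (hd _)]
  rw [Real.log_mul (pow_pos hPpos _).ne' haA.ne', Real.log_pow]
  have expand : ∑ i, c i * ((ni i : ℝ) * Real.log P / 2 + Real.log ((M i).det) / 2)
      = (∑ i, c i * (ni i : ℝ)) * (Real.log P / 2)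
        + (∑ i, c i * Real.log ((M i).det)) / 2 := by
    rw [Finset.sum_mul, Finset.sum_div, ← Finset.sum_add_distrib]
    exact Finset.sum_congr rfl fun i _ => by ring
  rw [expand, hdim]
  ring
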